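/- Let A be a nonnegative irreducible n×n tubal matrix, and let X be a nonnegative nonzero tubal vector that is a t-eigenvector of A (A * X = λX for some λ). Then X is positive: every one of its n tubal scalar components is nonzero. -/

import Mathlib

open Finset

/-- The t-product (circular convolution) of real tubal scalars of length `p`. -/
def tConv {p : ℕ} (a b : Fin p → ℝ) : Fin p → ℝ :=
  fun i => ∑ j : Fin p, a j * b (i - j)

/-- The t-product (circular convolution) of complex tubal scalars of length `p`. -/
noncomputable def tConvC {p : ℕ} (a b : Fin p → ℂ) : Fin p → ℂ :=
  fun i => ∑ j : Fin p, a j * b (i - j)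

/-- A tubal scalar is nonnegative if every entry is nonnegative. -/
def TNonneg {p : ℕ} (a : Fin p → ℝ) : Prop := ∀ i, 0 ≤ a i

/-- A tubal scalar is positive if it is nonnegative and not identically zero. -/
def TPos {p : ℕ} (a : Fin p → ℝ) : Prop := TNonneg a ∧ a ≠ 0

/-- A tubal scalar is strongly positive if every entry is strictly positive. -/
def TSPos {p : ℕ} (a : Fin p → ℝ) : Prop := ∀ i, 0 < a i

/-- The product of a tubal matrix and a tubal vector: `(A * X)_i = Σ_j a_{ij} * x_j`. -/
def tMatVec {n p : ℕ} (A : Fin n → Fin n → Fin p → ℝ) (X : Fin n → Fin p → ℝ) :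
    Fin n → Fin p → ℝ :=
  fun i => ∑ j : Fin n, tConv (A i j) (X j)

/-- A tubal matrix is reducible if some nonempty proper index set `I` satisfies
`a_{ij} = 0` for all `i ∈ I`, `j ∉ I`. -/
def TReducible {n p : ℕ} (A : Fin n → Fin n → Fin p → ℝ) : Prop :=
  ∃ I : Finset (Fin n), I.Nonempty ∧ I ≠ Finset.univ ∧ ∀ i ∈ I, ∀ j ∉ I, A i j = 0

/-- The t-spectrum of a real tubal matrix: complex `λ` with `A * X = λ X` for some
nonzero complex tubal vector `X`. -/
def tSpec {n p : ℕ} (A : Fin n → Fin n → Fin p → ℝ) : Set ℂ :=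
  {l | ∃ X : Fin n → Fin p → ℂ, X ≠ 0 ∧
    (fun i => ∑ j : Fin n, tConvC (fun k => (A i j k : ℂ)) (X j)) = l • X}

/-- The spectral radius over all t-eigenvalues. -/
noncomputable def tRho {n p : ℕ} (A : Fin n → Fin n → Fin p → ℝ) : ℝ :=
  sSup ((fun z : ℂ => ‖z‖) '' tSpec A)

/-- If `A` is nonnegative irreducible and `X` is a nonnegative nonzero t-eigenvector
of `A`, then `X` is positive: every tubal scalar component of `X` is nonzero. -/
theorem nonneg_eigvec_pos {n p : ℕ} (A : Fin n → Fin n → Fin p → ℝ)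
    (hA : ∀ i j, TNonneg (A i j)) (hirr : ¬ TReducible A)
    (X : Fin n → Fin p → ℝ) (hX : ∀ i, TNonneg (X i)) (hX0 : X ≠ 0)
    (l : ℝ) (heig : tMatVec A X = fun i => l • X i) :
    ∀ i, TPos (X i) := by
  intro i0
  refine ⟨hX i0, ?_⟩
  rcases Nat.eq_zero_or_pos p with hp | hp
  · subst hp
    exact absurd (funext fun i => funext fun k => k.elim0) hX0
  haveI : NeZero p := ⟨hp.ne'⟩
  intro h0
  apply hirr
  refine ⟨Finset.univ.filter (fun i => X i = 0), ⟨i0, by simp [h0]⟩, ?_, ?_⟩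
  · intro hI
    apply hX0
    funext j
    have hj := Finset.eq_univ_iff_forall.mp hI j
    simpa using hj
  · intro i hi j hj
    simp only [Finset.mem_filter, Finset.mem_univ, true_and] at hi hj
    have hXj : X j ≠ 0 := hj
    obtain ⟨k0, hk0⟩ : ∃ k0, 0 < X j k0 := by
      by_contra h
      push_neg at h
      exact hXj (funext fun k => le_antisymm (h k) (hX j k))
    have he : tMatVec A X i = 0 := by
      have := congrFun heig i
      rw [this, hi, smul_zero]
    have hconvnn : ∀ j' k, 0 ≤ tConv (A i j') (X j') k := fun j' k =>
      Finset.sum_nonneg fun m _ => mul_nonneg (hA i j' m) (hX j' _)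
    have hconv : ∀ k, tConv (A i j) (X j) k = 0 := by
      intro k
      have hsum : ∑ j' : Fin n, tConv (A i j') (X j') k = 0 := by
        have := congrFun he k
        simpa [tMatVec, Finset.sum_apply] using this
      exact (Finset.sum_eq_zero_iff_of_nonneg fun j' _ => hconvnn j' k).mp hsum j
        (Finset.mem_univ j)
    funext k
    have hck := hconv (k + k0)
    have hterm := (Finset.sum_eq_zero_iff_of_nonneg fun m _ =>
      mul_nonneg (hA i j m) (hX j _)).mp hck k (Finset.mem_univ k)
    rw [add_sub_cancel_left] at hterm
    have := mul_eq_zero.mp hterm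
    rcases this with h | h
    · exact h
    · exact absurd h hk0.ne'
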